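/- Let p ∈ [0,1] and consider the homogeneous Markov chain {Y^{(t)}} on state space {0,1,2,3} with Y^{(0)} = 0 and transition probabilities P(j → j+1) = (3-j)p/6 and P(j → j) = 1 - (3-j)p/6 for j = 0,1,2, and state 3 absorbing. Then the expected number of triangles in G(n,p;C([n],4)) equals C(n,3)·[(1 - Σ_{i=0}^{2} p_{0i}^{(n-3)}) + Σ_{i=0}^{2} p_{0i}^{(n-3)}·(P(Bin(C(n-3,2), p/6) ≥ 1))^{3-i}], where p_{0i}^{(n-3)} is the (0,i) entry of the (n-3)-rd power of the transition matrix. -/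

import Mathlib

open scoped ENNReal

/-- Bernoulli with success probability `min q 1`. -/
noncomputable def bern (q : ℝ≥0∞) : PMF Bool :=
  PMF.ofFintype (fun b => cond b (min q 1) (1 - min q 1)) (by simp [min_le_right q 1])

/-- For a hyperedge `H`, choose a uniformly random doubleton `D ⊆ H` and output `some D`
with probability `p` (an edge is placed on `D`), `none` otherwise. -/
noncomputable def edgePMF {n : ℕ} (p : ℝ≥0∞) (H : Finset (Fin n)) :
    PMF (Option (Finset (Fin n))) :=
  if h : (H.powersetCard 2).Nonempty then
    (PMF.uniformOfFinset _ h).bind fun D =>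
      (bern p).map fun b => if b then some D else none
  else PMF.pure none

/-- The random multigraph `G(n, p; 𝓗)`: for each hyperedge of the list `𝓗` independently,
choose a uniformly random doubleton and join its two vertices by an edge with probability `p`.
The resulting multigraph is recorded as the multiset of its edges (doubletons, with
multiplicity). -/
noncomputable def modelPMF {n : ℕ} (p : ℝ≥0∞) :
    List (Finset (Fin n)) → PMF (Multiset (Finset (Fin n)))
  | [] => PMF.pure 0
  | H :: T => (edgePMF p H).bind fun o =>
      (modelPMF p T).map fun G => o.elim G (fun D => D ::ₘ G)

/-- Probability that a sample from `μ` lies in `S`. -/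
noncomputable def prob {α : Type*} (μ : PMF α) (S : Set α) : ℝ≥0∞ := μ.toOuterMeasure S

/-- The complete `k`-uniform hypergraph on `[n]`, as a list of hyperedges. -/
noncomputable def allSets (n k : ℕ) : List (Finset (Fin n)) :=
  ((Finset.univ : Finset (Fin n)).powersetCard k).toList

/-- Degree of a vertex in a multigraph: number of edges incident to it, with multiplicity. -/
def degOf {n : ℕ} (v : Fin n) (G : Multiset (Finset (Fin n))) : ℕ :=
  Multiset.card (G.filter fun D => v ∈ D)

/-- Poisson-Binomial: number of successes in independent trials with the given success
probabilities. -/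
noncomputable def pbPMF : List ℝ≥0∞ → PMF ℕ
  | [] => PMF.pure 0
  | q :: T => (bern q).bind fun b => (pbPMF T).map fun m => if b then m + 1 else m

/-- Binomial distribution `Bin(m, q)` on `ℕ`. -/
noncomputable def binomPMF (m : ℕ) (q : ℝ≥0∞) : PMF ℕ := pbPMF (List.replicate m q)

open Classical in
/-- Number of triangles of a multigraph: triples of vertices all of whose pairs are joined
by at least one edge. -/
noncomputable def triangleCount {n : ℕ} (G : Multiset (Finset (Fin n))) : ℕ :=
  ((Finset.univ : Finset (Finset (Fin n))).filter fun T =>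
    T.card = 3 ∧ ∀ i ∈ T, ∀ j ∈ T, i ≠ j → ({i, j} : Finset (Fin n)) ∈ G).card

/-- Transition matrix of the Markov chain on `{0,1,2,3}` tracking how many pairs of a fixed
triple are joined: `P(j → j+1) = (3-j)p/6`, `P(j → j) = 1 - (3-j)p/6`, state `3`
absorbing. -/
noncomputable def trMat (p : ℝ) : Matrix (Fin 4) (Fin 4) ℝ :=
  !![1 - p / 2, p / 2, 0, 0;
     0, 1 - p / 3, p / 3, 0;
     0, 0, 1 - p / 6, p / 6;
     0, 0, 0, 1]

section auxEdge
variable {n : ℕ} {p : ℝ≥0∞} {H : Finset (Fin n)}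

lemma pc2_card (hH : H.card = 4) : (H.powersetCard 2).card = 6 := by
  rw [Finset.card_powersetCard, hH]; rfl

lemma pc2_ne (hH : H.card = 4) : (H.powersetCard 2).Nonempty := by
  rw [← Finset.card_pos, pc2_card hH]; norm_num

lemma bern_true (hp : p ≤ 1) : bern p true = p := by
  simp [bern, PMF.ofFintype_apply, min_eq_left hp]

lemma bern_false (hp : p ≤ 1) : bern p false = 1 - p := by
  simp [bern, PMF.ofFintype_apply, min_eq_left hp]

lemma edge_some (hp : p ≤ 1) (hH : H.card = 4) (D : Finset (Fin n)) :
    edgePMF p H (some D) = if D ∈ H.powersetCard 2 then 6⁻¹ * p else 0 := by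
  rw [edgePMF, dif_pos (pc2_ne hH)]
  rw [PMF.bind_apply]
  have : ∀ D' : Finset (Fin n), (PMF.uniformOfFinset _ (pc2_ne hH)) D' *
      ((bern p).map fun b => if b then some D' else none) (some D) =
      if D' = D then (PMF.uniformOfFinset _ (pc2_ne hH)) D' * p else 0 := by
    intro D'
    rw [PMF.map_apply]
    by_cases h : D' = D
    · subst h
      simp [tsum_bool, bern_true hp]
    · simp [tsum_bool, h, Ne.symm h]
  rw [tsum_congr this, tsum_eq_single D (by intro b hb; simp [hb])]
  simp only [if_pos rfl, PMF.uniformOfFinset_apply, pc2_card hH]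
  by_cases h : D ∈ H.powersetCard 2 <;> simp [h]

lemma edge_none (hp : p ≤ 1) (hH : H.card = 4) : edgePMF p H none = 1 - p := by
  rw [edgePMF, dif_pos (pc2_ne hH)]
  rw [PMF.bind_apply]
  have : ∀ D' : Finset (Fin n), (PMF.uniformOfFinset _ (pc2_ne hH)) D' *
      ((bern p).map fun b => if b then some D' else none) none =
      (PMF.uniformOfFinset _ (pc2_ne hH)) D' * (1 - p) := by
    intro D'
    rw [PMF.map_apply]
    simp [tsum_bool, bern_false hp]
  rw [tsum_congr this, ENNReal.tsum_mul_right, PMF.tsum_coe, one_mul]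

lemma edge_avoid (hH : H.card = 4) {q : ℝ} (hq0 : 0 ≤ q) (hq1 : q ≤ 1)
    (V : Finset (Finset (Fin n))) :
    prob (edgePMF (ENNReal.ofReal q) H) {o | ∀ D ∈ V, o ≠ some D} =
      ENNReal.ofReal (1 - ((H.powersetCard 2).filter (· ∈ V)).card * q / 6) := by
  have hp : ENNReal.ofReal q ≤ 1 := by
    rw [← ENNReal.ofReal_one]; exact ENNReal.ofReal_le_ofReal hq1
  set P := ENNReal.ofReal q with hP
  set S : Set (Option (Finset (Fin n))) := {o | ∀ D ∈ V, o ≠ some D} with hS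
  set k := ((H.powersetCard 2).filter (· ∈ V)).card with hk
  have hk6 : k ≤ 6 := by
    rw [hk, ← pc2_card hH]; exact Finset.card_filter_le _ _
  rw [prob, PMF.toOuterMeasure_apply]
  rw [tsum_eq_sum (s := insert none ((H.powersetCard 2).image some))
    (by
      intro o ho
      apply Set.indicator_apply_eq_zero.mpr
      intro hoS
      match o with
      | none => exact absurd (Finset.mem_insert_self _ _) ho
      | some D =>
        rw [edge_some hp hH, if_neg]
        intro hD
        exact ho (Finset.mem_insert_of_mem (Finset.mem_image_of_mem _ hD)))]
  rw [Finset.sum_insert (by simp)]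
  rw [Finset.sum_image (fun a _ b _ h => Option.some_inj.mp h)]
  have h1 : S.indicator (edgePMF P H) none = 1 - P := by
    rw [Set.indicator_of_mem (by intro D hD h; exact nomatch h) _,
      edge_none hp hH]
  have h2 : ∀ D ∈ H.powersetCard 2, S.indicator (edgePMF P H) (some D)
      = if D ∈ V then 0 else 6⁻¹ * P := by
    intro D hD
    by_cases hv : D ∈ V
    · rw [if_pos hv, Set.indicator_of_notMem]
      intro hmem
      exact hmem D hv rfl
    · rw [if_neg hv, Set.indicator_of_mem, edge_some hp hH, if_pos hD]
      intro D' hD' h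
      exact hv ((Option.some_inj.mp h) ▸ hD')
  rw [Finset.sum_congr rfl h2, h1, Finset.sum_ite, Finset.sum_const_zero,
    Finset.sum_const, zero_add]
  have hcard : ((H.powersetCard 2).filter (fun D => ¬ D ∈ V)).card = 6 - k := by
    rw [Finset.filter_not, Finset.card_sdiff_of_subset (Finset.filter_subset _ _), pc2_card hH, hk]
  rw [hcard, nsmul_eq_mul]
  have e1 : (1 : ℝ≥0∞) - P = ENNReal.ofReal (1 - q) := by
    rw [ENNReal.ofReal_sub _ hq0, ENNReal.ofReal_one]
  have hk6' : (k : ℝ) ≤ 6 := by exact_mod_cast hk6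
  have e2 : ((6 - k : ℕ) : ℝ≥0∞) * (6⁻¹ * P) = ENNReal.ofReal ((6 - (k:ℝ)) * (6⁻¹ * q)) := by
    rw [ENNReal.ofReal_mul (by linarith), ENNReal.ofReal_mul (by norm_num)]
    congr 1
    · rw [show (6 - (k:ℝ)) = ((6 - k : ℕ) : ℝ) by
        push_cast [Nat.cast_sub hk6]; ring, ENNReal.ofReal_natCast]
    · congr 1
      rw [ENNReal.ofReal_inv_of_pos (by norm_num : (0:ℝ) < 6), ENNReal.ofReal_ofNat]
  rw [e1, e2, ← ENNReal.ofReal_add (by linarith) (mul_nonneg (by linarith) (by positivity))]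
  congr 1
  have : ((6 - k : ℕ) : ℝ) = 6 - (k : ℝ) := by
    rw [Nat.cast_sub hk6]; norm_num
  push_cast [this]
  ring
end auxEdge


lemma model_avoid {n : ℕ} (p : ℝ≥0∞) (V : Finset (Finset (Fin n)))
    (L : List (Finset (Fin n))) :
    prob (modelPMF p L) {G | ∀ D ∈ V, D ∉ G} =
      (L.map fun H => prob (edgePMF p H) {o | ∀ D ∈ V, o ≠ some D}).prod := by
  induction L with
  | nil =>
    rw [modelPMF, prob, PMF.toOuterMeasure_pure_apply]
    rw [if_pos (by intro D hD; exact Multiset.notMem_zero D)]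
    simp
  | cons H L ih =>
    rw [modelPMF, prob, PMF.toOuterMeasure_bind_apply]
    have key : ∀ o : Option (Finset (Fin n)),
        edgePMF p H o *
          ((modelPMF p L).map fun G => o.elim G (fun D => D ::ₘ G)).toOuterMeasure
            {G | ∀ D ∈ V, D ∉ G} =
        ({o | ∀ D ∈ V, o ≠ some D} : Set (Option (Finset (Fin n)))).indicator
          (edgePMF p H) o * prob (modelPMF p L) {G | ∀ D ∈ V, D ∉ G} := by
      intro o
      rw [PMF.toOuterMeasure_map_apply]
      match o with
      | none =>
        rw [Set.indicator_of_mem (show (none : Option (Finset (Fin n))) ∈ {o | ∀ D ∈ V, o ≠ some D} from fun D hD h => nomatch h)]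
        rfl
      | some D =>
        by_cases hv : D ∈ V
        · rw [Set.indicator_of_notMem (show some D ∉ {o | ∀ D ∈ V, o ≠ some D} from fun hmem => hmem D hv rfl)]
          have : ((fun G => Option.elim (some D) G (fun D' => D' ::ₘ G)) ⁻¹'
              {G | ∀ D' ∈ V, D' ∉ G}) = ∅ := by
            ext G
            simp only [Set.mem_preimage, Set.mem_setOf_eq, Set.mem_empty_iff_false,
              iff_false, not_forall]
            exact ⟨D, hv, by simp⟩
          rw [this]
          simp
        · rw [Set.indicator_of_mem (show some D ∈ {o | ∀ D ∈ V, o ≠ some D} from fun D' hD' h => hv (by rw [Option.some_inj] at h; exact h ▸ hD'))]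
          congr 1
          rw [prob]
          congr 1
          ext G
          simp only [Set.mem_preimage, Set.mem_setOf_eq, Option.elim,
            Multiset.mem_cons]
          constructor
          · intro h D' hD' hG
            exact h D' hD' (Or.inr hG)
          · intro h D' hD'
            rw [not_or]
            exact ⟨fun hDD => hv (hDD ▸ hD'), h D' hD'⟩
    rw [tsum_congr key, ENNReal.tsum_mul_right, List.map_cons, List.prod_cons]
    rw [ih, prob, PMF.toOuterMeasure_apply]

section auxCount
variable {n : ℕ} {T : Finset (Fin n)}

lemma card_ext_sets (hT : T.card = 3) :
    ((Finset.univ.powersetCard 4).filter (fun H => T ⊆ H)).card = n - 3 := by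
  have himg : (Finset.univ.powersetCard 4).filter (fun H => T ⊆ H) =
      (Finset.univ \ T).image (fun x => insert x T) := by
    ext H
    simp only [Finset.mem_filter, Finset.mem_powersetCard, Finset.mem_image,
      Finset.mem_sdiff, Finset.mem_univ, true_and]
    constructor
    · rintro ⟨⟨-, hc⟩, hTH⟩
      have hcd : (H \ T).card = 1 := by
        rw [Finset.card_sdiff_of_subset hTH, hc, hT]
      obtain ⟨a, ha⟩ := Finset.card_eq_one.mp hcd
      refine ⟨a, ?_, ?_⟩
      · have : a ∈ H \ T := ha ▸ Finset.mem_singleton_self a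
        exact (Finset.mem_sdiff.mp this).2
      · rw [show insert a T = {a} ∪ T from rfl, ← ha, Finset.sdiff_union_of_subset hTH]
    · rintro ⟨a, haT, rfl⟩
      refine ⟨⟨Finset.subset_univ _, ?_⟩, Finset.subset_insert _ _⟩
      rw [Finset.card_insert_of_notMem haT, hT]
  rw [himg, Finset.card_image_of_injOn, Finset.card_sdiff_of_subset (Finset.subset_univ T),
    Finset.card_univ, Fintype.card_fin, hT]
  intro a ha b hb hab
  have haT : a ∉ T := (Finset.mem_sdiff.mp ha).2
  have hbT : b ∉ T := (Finset.mem_sdiff.mp hb).2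
  have hab' : insert a T = insert b T := hab
  have : a ∈ insert b T := hab' ▸ Finset.mem_insert_self a T
  rcases Finset.mem_insert.mp this with h | h
  · exact h
  · exact absurd h haT

lemma card_pair_sets (hT : T.card = 3) {D : Finset (Fin n)} (hD : D ⊆ T)
    (hD2 : D.card = 2) :
    ((Finset.univ.powersetCard 4).filter (fun H => H ∩ T = D)).card = (n - 3).choose 2 := by
  have himg : (Finset.univ.powersetCard 4).filter (fun H => H ∩ T = D) =
      ((Finset.univ \ T).powersetCard 2).image (fun S => S ∪ D) := by
    ext H
    simp only [Finset.mem_filter, Finset.mem_powersetCard, Finset.mem_image,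
      Finset.mem_univ, true_and, Finset.subset_univ]
    constructor
    · rintro ⟨hc, hHT⟩
      refine ⟨H \ T, ⟨?_, ?_⟩, ?_⟩
      · intro x hx
        rw [Finset.mem_sdiff] at hx ⊢
        exact ⟨Finset.mem_univ x, hx.2⟩
      · have := Finset.card_sdiff_add_card_inter H T
        rw [hHT, hc, hD2] at this
        omega
      · rw [← hHT, Finset.sdiff_union_inter]
    · rintro ⟨S, ⟨hSsub, hS2⟩, rfl⟩
      have hdisj : Disjoint S T := by
        rw [Finset.disjoint_left]
        intro x hxS hxT
        exact (Finset.mem_sdiff.mp (hSsub hxS)).2 hxT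
      constructor
      · rw [Finset.card_union_of_disjoint (hdisj.mono_right hD), hS2, hD2]
      · rw [Finset.union_inter_distrib_right, Finset.inter_eq_left.mpr hD,
          (Finset.disjoint_iff_inter_eq_empty.mp hdisj), Finset.empty_union]
  rw [himg, Finset.card_image_of_injOn, Finset.card_powersetCard,
    Finset.card_sdiff_of_subset (Finset.subset_univ T), Finset.card_univ, Fintype.card_fin, hT]
  intro S hS S' hS' h
  rw [Finset.mem_coe, Finset.mem_powersetCard] at hS hS'
  have key : ∀ S₀ : Finset (Fin n), S₀ ⊆ Finset.univ \ T → (S₀ ∪ D) \ T = S₀ := by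
    intro S₀ hsub
    rw [Finset.union_sdiff_distrib, Finset.sdiff_eq_empty_iff_subset.mpr hD,
      Finset.union_empty]
    apply Finset.sdiff_eq_self_iff_disjoint.mpr
    rw [Finset.disjoint_left]
    intro x hx hxT
    exact (Finset.mem_sdiff.mp (hsub hx)).2 hxT
  have h' : S ∪ D = S' ∪ D := h
  rw [← key S hS.1, ← key S' hS'.1, h']
end auxCount


lemma triple_avoid {n : ℕ} {q : ℝ} (hq0 : 0 ≤ q) (hq1 : q ≤ 1)
    {T : Finset (Fin n)} (hT : T.card = 3)
    {V : Finset (Finset (Fin n))} (hV : V ⊆ T.powersetCard 2) :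
    prob (modelPMF (ENNReal.ofReal q) (allSets n 4)) {G | ∀ D ∈ V, D ∉ G} =
      ENNReal.ofReal ((1 - V.card * q / 6) ^ (n - 3) *
        (1 - q / 6) ^ (V.card * (n - 3).choose 2)) := by
  have hV2 : ∀ D ∈ V, D ⊆ T ∧ D.card = 2 := fun D hD =>
    Finset.mem_powersetCard.mp (hV hD)
  have hVcard : V.card ≤ 3 := by
    have := Finset.card_le_card hV
    rwa [Finset.card_powersetCard, hT] at this
  have hVr : (V.card : ℝ) ≤ 3 := by exact_mod_cast hVcard
  rw [model_avoid, allSets, Finset.prod_map_toList]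
  set s := (Finset.univ : Finset (Fin n)).powersetCard 4 with hs
  have card4 : ∀ H ∈ s, H.card = 4 := fun H hH =>
    (Finset.mem_powersetCard.mp hH).2
  rw [Finset.prod_congr rfl (fun H hH => edge_avoid (card4 H hH) hq0 hq1 V)]
  -- split the product
  rw [← Finset.prod_filter_mul_prod_filter_not s (fun H => T ⊆ H)]
  rw [← Finset.prod_filter_mul_prod_filter_not (s.filter (fun H => ¬ T ⊆ H))
    (fun H => H ∩ T ∈ V)]
  -- part 1 : T ⊆ H
  have h1 : ∀ H ∈ s.filter (fun H => T ⊆ H),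
      ENNReal.ofReal (1 - ((H.powersetCard 2).filter (· ∈ V)).card * q / 6) =
      ENNReal.ofReal (1 - V.card * q / 6) := by
    intro H hH
    rw [Finset.mem_filter] at hH
    congr 3
    have : (H.powersetCard 2).filter (· ∈ V) = V := by
      ext D
      simp only [Finset.mem_filter, Finset.mem_powersetCard]
      constructor
      · exact fun h => h.2
      · intro hD
        exact ⟨⟨(hV2 D hD).1.trans hH.2, (hV2 D hD).2⟩, hD⟩
    rw [this]
  -- part 2 : H ∩ T ∈ V
  have h2 : ∀ H ∈ (s.filter (fun H => ¬ T ⊆ H)).filter (fun H => H ∩ T ∈ V),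
      ENNReal.ofReal (1 - ((H.powersetCard 2).filter (· ∈ V)).card * q / 6) =
      ENNReal.ofReal (1 - q / 6) := by
    intro H hH
    rw [Finset.mem_filter, Finset.mem_filter] at hH
    obtain ⟨⟨hHs, -⟩, hHV⟩ := hH
    have : (H.powersetCard 2).filter (· ∈ V) = {H ∩ T} := by
      ext D
      simp only [Finset.mem_filter, Finset.mem_powersetCard, Finset.mem_singleton]
      constructor
      · rintro ⟨⟨hDH, hD2⟩, hDV⟩
        have hsub : D ⊆ H ∩ T := Finset.subset_inter hDH (hV2 D hDV).1
        apply Finset.eq_of_subset_of_card_le hsub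
        rw [hD2, (hV2 _ hHV).2]
      · rintro rfl
        exact ⟨⟨Finset.inter_subset_left, (hV2 _ hHV).2⟩, hHV⟩
    rw [this, Finset.card_singleton]
    norm_num
  -- part 3 : rest
  have h3 : ∀ H ∈ (s.filter (fun H => ¬ T ⊆ H)).filter (fun H => ¬ H ∩ T ∈ V),
      ENNReal.ofReal (1 - ((H.powersetCard 2).filter (· ∈ V)).card * q / 6) = 1 := by
    intro H hH
    rw [Finset.mem_filter, Finset.mem_filter] at hH
    obtain ⟨⟨hHs, hnsub⟩, hHV⟩ := hH
    have : (H.powersetCard 2).filter (· ∈ V) = ∅ := by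
      rw [Finset.eq_empty_iff_forall_notMem]
      intro D hD
      rw [Finset.mem_filter, Finset.mem_powersetCard] at hD
      obtain ⟨⟨hDH, hD2⟩, hDV⟩ := hD
      have hsub : D ⊆ H ∩ T := Finset.subset_inter hDH (hV2 D hDV).1
      have hle : 2 ≤ (H ∩ T).card := hD2 ▸ Finset.card_le_card hsub
      have hle3 : (H ∩ T).card ≤ 3 := hT ▸ Finset.card_le_card Finset.inter_subset_right
      interval_cases hc : (H ∩ T).card
      · have : D = H ∩ T := Finset.eq_of_subset_of_card_le hsub (by omega)
        exact hHV (this ▸ hDV)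
      · have : H ∩ T = T := Finset.eq_of_subset_of_card_le Finset.inter_subset_right
          (by omega)
        exact hnsub (by rw [← this]; exact Finset.inter_subset_left)
    rw [this]
    simp
  rw [Finset.prod_congr rfl h1, Finset.prod_congr rfl h2, Finset.prod_congr rfl h3]
  rw [Finset.prod_const, Finset.prod_const, Finset.prod_const, one_pow, mul_one]
  -- cardinalities
  rw [card_ext_sets hT]
  have hBcard : ((s.filter (fun H => ¬ T ⊆ H)).filter (fun H => H ∩ T ∈ V)).card =
      V.card * (n - 3).choose 2 := by
    have heq : (s.filter (fun H => ¬ T ⊆ H)).filter (fun H => H ∩ T ∈ V) =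
        s.filter (fun H => H ∩ T ∈ V) := by
      rw [Finset.filter_filter]
      apply Finset.filter_congr
      intro H hH
      simp only [and_iff_right_iff_imp]
      intro hHV hsub
      have : H ∩ T = T := Finset.inter_eq_right.mpr hsub
      have h3' := (hV2 _ hHV).2
      rw [this, hT] at h3'
      omega
    rw [heq]
    have hbi : s.filter (fun H => H ∩ T ∈ V) =
        V.biUnion (fun D => s.filter (fun H => H ∩ T = D)) := by
      ext H
      simp only [Finset.mem_filter, Finset.mem_biUnion]
      constructor
      · rintro ⟨hHs, hHV⟩
        exact ⟨H ∩ T, hHV, hHs, rfl⟩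
      · rintro ⟨D, hD, hHs, rfl⟩
        exact ⟨hHs, hD⟩
    rw [hbi, Finset.card_biUnion]
    · rw [Finset.sum_congr rfl (fun D hD => card_pair_sets hT (hV2 D hD).1 (hV2 D hD).2),
        Finset.sum_const, smul_eq_mul]
    · intro D hD D' hD' hne
      rw [Function.onFun, Finset.disjoint_left]
      intro H hH hH'
      rw [Finset.mem_filter] at hH hH'
      exact hne (hH.2 ▸ hH'.2)
  rw [hBcard]
  -- combine ofReal powers
  have hb1 : (0:ℝ) ≤ 1 - V.card * q / 6 := by nlinarith
  have hb2 : (0:ℝ) ≤ 1 - q / 6 := by linarith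
  rw [← ENNReal.ofReal_pow hb1, ← ENNReal.ofReal_pow hb2,
    ← ENNReal.ofReal_mul (by positivity)]

noncomputable def gaux (n : ℕ) (q : ℝ) (v : ℕ) : ℝ :=
  (1 - v * q / 6) ^ (n - 3) * (1 - q / 6) ^ (v * (n - 3).choose 2)

lemma prob_le_one {α : Type*} (μ : PMF α) (S : Set α) : prob μ S ≤ 1 := by
  rw [prob, PMF.toOuterMeasure_apply, ← PMF.tsum_coe μ]
  exact ENNReal.tsum_le_tsum fun x => Set.indicator_apply_le fun _ => le_rfl

lemma prob_ne_top {α : Type*} (μ : PMF α) (S : Set α) : prob μ S ≠ ⊤ :=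
  ne_top_of_le_ne_top ENNReal.one_ne_top (prob_le_one μ S)

lemma gaux_nonneg {n : ℕ} {q : ℝ} (hq0 : 0 ≤ q) (hq1 : q ≤ 1) {v : ℕ} (hv : v ≤ 3) :
    0 ≤ gaux n q v := by
  have hvr : (v : ℝ) ≤ 3 := by exact_mod_cast hv
  apply mul_nonneg <;> apply pow_nonneg <;> nlinarith

lemma triangle_prob {n : ℕ} {q : ℝ} (hq0 : 0 ≤ q) (hq1 : q ≤ 1)
    {T : Finset (Fin n)} (hT : T.card = 3) :
    (prob (modelPMF (ENNReal.ofReal q) (allSets n 4))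
        {G | ∀ i ∈ T, ∀ j ∈ T, i ≠ j → ({i, j} : Finset (Fin n)) ∈ G}).toReal =
      1 - 3 * gaux n q 1 + 3 * gaux n q 2 - gaux n q 3 := by
  set μ := modelPMF (ENNReal.ofReal q) (allSets n 4) with hμ
  -- rewrite the event in terms of doubletons
  have hev : {G : Multiset (Finset (Fin n)) |
        ∀ i ∈ T, ∀ j ∈ T, i ≠ j → ({i, j} : Finset (Fin n)) ∈ G} =
      {G | ∀ D ∈ T.powersetCard 2, D ∈ G} := by
    ext G
    simp only [Set.mem_setOf_eq]
    constructor
    · intro h D hD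
      rw [Finset.mem_powersetCard] at hD
      obtain ⟨i, j, hij, rfl⟩ := Finset.card_eq_two.mp hD.2
      exact h i (hD.1 (by simp)) j (hD.1 (by simp)) hij
    · intro h i hi j hj hij
      apply h
      rw [Finset.mem_powersetCard]
      constructor
      · intro x hx
        rcases Finset.mem_insert.mp hx with rfl | hx
        · exact hi
        · exact (Finset.mem_singleton.mp hx) ▸ hj
      · exact Finset.card_pair hij
  rw [hev]
  -- the three pairs
  have hpc : (T.powersetCard 2).card = 3 := by
    rw [Finset.card_powersetCard, hT]; rfl
  obtain ⟨a, b, c, hab, hac, hbc, habc⟩ := Finset.card_eq_three.mp hpc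
  have hsub : ∀ V : Finset (Finset (Fin n)), V ⊆ {a, b, c} → V ⊆ T.powersetCard 2 := by
    intro V hVs
    rw [habc]; exact hVs
  -- values of avoidance probabilities
  have hval : ∀ V : Finset (Finset (Fin n)), V ⊆ {a, b, c} →
      prob μ {G | ∀ D ∈ V, D ∉ G} = ENNReal.ofReal (gaux n q V.card) :=
    fun V hVs => triple_avoid hq0 hq1 hT (hsub V hVs)
  -- inclusion-exclusion identity in ℝ≥0∞
  have key : ∀ G : Multiset (Finset (Fin n)),
      ({G | ∀ D ∈ ({a, b, c} : Finset (Finset (Fin n))), D ∈ G} : Set _).indicator μ G +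
        (({G | ∀ D ∈ ({a} : Finset (Finset (Fin n))), D ∉ G} : Set _).indicator μ G +
         ({G | ∀ D ∈ ({b} : Finset (Finset (Fin n))), D ∉ G} : Set _).indicator μ G +
         ({G | ∀ D ∈ ({c} : Finset (Finset (Fin n))), D ∉ G} : Set _).indicator μ G +
         ({G | ∀ D ∈ ({a, b, c} : Finset (Finset (Fin n))), D ∉ G} : Set _).indicator μ G) =
      μ G +
        (({G | ∀ D ∈ ({a, b} : Finset (Finset (Fin n))), D ∉ G} : Set _).indicator μ G +
         ({G | ∀ D ∈ ({a, c} : Finset (Finset (Fin n))), D ∉ G} : Set _).indicator μ G +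
         ({G | ∀ D ∈ ({b, c} : Finset (Finset (Fin n))), D ∉ G} : Set _).indicator μ G) := by
    intro G
    by_cases ha : a ∈ G <;> by_cases hb : b ∈ G <;> by_cases hc : c ∈ G <;>
      simp [Set.indicator_apply, ha, hb, hc]
    ring
  have E : prob μ {G | ∀ D ∈ ({a, b, c} : Finset (Finset (Fin n))), D ∈ G} +
      (prob μ {G | ∀ D ∈ ({a} : Finset (Finset (Fin n))), D ∉ G} +
       prob μ {G | ∀ D ∈ ({b} : Finset (Finset (Fin n))), D ∉ G} +
       prob μ {G | ∀ D ∈ ({c} : Finset (Finset (Fin n))), D ∉ G} +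
       prob μ {G | ∀ D ∈ ({a, b, c} : Finset (Finset (Fin n))), D ∉ G}) =
      1 + (prob μ {G | ∀ D ∈ ({a, b} : Finset (Finset (Fin n))), D ∉ G} +
       prob μ {G | ∀ D ∈ ({a, c} : Finset (Finset (Fin n))), D ∉ G} +
       prob μ {G | ∀ D ∈ ({b, c} : Finset (Finset (Fin n))), D ∉ G}) := by
    have := tsum_congr (L := SummationFilter.unconditional _) key
    simpa only [prob, PMF.toOuterMeasure_apply, ENNReal.tsum_add, PMF.tsum_coe] using this
  -- cardinalities
  have hca : ({a} : Finset (Finset (Fin n))).card = 1 := Finset.card_singleton a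
  have hcb : ({b} : Finset (Finset (Fin n))).card = 1 := Finset.card_singleton b
  have hcc : ({c} : Finset (Finset (Fin n))).card = 1 := Finset.card_singleton c
  have hcab : ({a, b} : Finset (Finset (Fin n))).card = 2 := Finset.card_pair hab
  have hcac : ({a, c} : Finset (Finset (Fin n))).card = 2 := Finset.card_pair hac
  have hcbc : ({b, c} : Finset (Finset (Fin n))).card = 2 := Finset.card_pair hbc
  have hcabc : ({a, b, c} : Finset (Finset (Fin n))).card = 3 := by
    rw [Finset.card_insert_of_notMem (by simp [hab, hac]),
      Finset.card_insert_of_notMem (by simp [hbc]), Finset.card_singleton]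
  -- substitute values
  rw [hval {a} (by intro x hx; simp at hx; simp [hx]),
      hval {b} (by intro x hx; simp at hx; simp [hx]),
      hval {c} (by intro x hx; simp at hx; simp [hx]),
      hval {a, b, c} (le_refl _),
      hval {a, b} (by intro x hx; simp at hx; rcases hx with rfl | rfl <;> simp),
      hval {a, c} (by intro x hx; simp at hx; rcases hx with rfl | rfl <;> simp),
      hval {b, c} (by intro x hx; simp at hx; rcases hx with rfl | rfl <;> simp),
      hca, hcb, hcc, hcab, hcac, hcbc, hcabc] at E
  -- pass to ℝ
  have h1 : 0 ≤ gaux n q 1 := gaux_nonneg hq0 hq1 (by norm_num)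
  have h2 : 0 ≤ gaux n q 2 := gaux_nonneg hq0 hq1 (by norm_num)
  have h3 : 0 ≤ gaux n q 3 := gaux_nonneg hq0 hq1 (by norm_num)
  have sL : ENNReal.ofReal (gaux n q 1) + ENNReal.ofReal (gaux n q 1) +
      ENNReal.ofReal (gaux n q 1) + ENNReal.ofReal (gaux n q 3) =
      ENNReal.ofReal (3 * gaux n q 1 + gaux n q 3) := by
    rw [← ENNReal.ofReal_add h1 h1, ← ENNReal.ofReal_add (by linarith) h1,
      ← ENNReal.ofReal_add (by linarith) h3]
    congr 1
    ring
  have sR : ENNReal.ofReal (gaux n q 2) + ENNReal.ofReal (gaux n q 2) +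
      ENNReal.ofReal (gaux n q 2) = ENNReal.ofReal (3 * gaux n q 2) := by
    rw [← ENNReal.ofReal_add h2 h2, ← ENNReal.ofReal_add (by linarith) h2]
    congr 1
    ring
  rw [sL, sR] at E
  have Ereal := congrArg ENNReal.toReal E
  rw [ENNReal.toReal_add (prob_ne_top μ _) ENNReal.ofReal_ne_top,
    ENNReal.toReal_add ENNReal.one_ne_top ENNReal.ofReal_ne_top,
    ENNReal.toReal_ofReal (by linarith), ENNReal.toReal_ofReal (by linarith),
    ENNReal.toReal_one] at Ereal
  have goalsub : {G : Multiset (Finset (Fin n)) | ∀ D ∈ T.powersetCard 2, D ∈ G} =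
      {G | ∀ D ∈ ({a, b, c} : Finset (Finset (Fin n))), D ∈ G} := by rw [habc]
  rw [goalsub]
  linarith

open Classical in
lemma expectation_eq {n : ℕ} (μ : PMF (Multiset (Finset (Fin n)))) :
    ∑' G, μ G * (triangleCount G : ℝ≥0∞) =
      ∑ T ∈ (Finset.univ : Finset (Fin n)).powersetCard 3,
        prob μ {G | ∀ i ∈ T, ∀ j ∈ T, i ≠ j → ({i, j} : Finset (Fin n)) ∈ G} := by
  have h1 : ∀ G : Multiset (Finset (Fin n)), (triangleCount G : ℝ≥0∞) =
      ∑ T ∈ (Finset.univ : Finset (Finset (Fin n))),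
        if T.card = 3 ∧ ∀ i ∈ T, ∀ j ∈ T, i ≠ j → ({i, j} : Finset (Fin n)) ∈ G
        then (1 : ℝ≥0∞) else 0 := by
    intro G
    rw [triangleCount, Finset.card_filter]
    push_cast
    rfl
  calc ∑' G, μ G * (triangleCount G : ℝ≥0∞)
      = ∑' G, ∑ T ∈ (Finset.univ : Finset (Finset (Fin n))),
          (μ G * if T.card = 3 ∧ ∀ i ∈ T, ∀ j ∈ T, i ≠ j →
            ({i, j} : Finset (Fin n)) ∈ G then (1 : ℝ≥0∞) else 0) := by
        simp_rw [h1, Finset.mul_sum]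
    _ = ∑ T ∈ (Finset.univ : Finset (Finset (Fin n))), ∑' G,
          (μ G * if T.card = 3 ∧ ∀ i ∈ T, ∀ j ∈ T, i ≠ j →
            ({i, j} : Finset (Fin n)) ∈ G then (1 : ℝ≥0∞) else 0) :=
        Summable.tsum_finsetSum fun _ _ => ENNReal.summable
    _ = ∑ T ∈ (Finset.univ : Finset (Finset (Fin n))),
          if T.card = 3 then
            prob μ {G | ∀ i ∈ T, ∀ j ∈ T, i ≠ j → ({i, j} : Finset (Fin n)) ∈ G}
          else 0 := by
        apply Finset.sum_congr rfl
        intro T _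
        by_cases hT : T.card = 3
        · rw [if_pos hT, prob, PMF.toOuterMeasure_apply]
          apply tsum_congr
          intro G
          rw [Set.indicator_apply]
          by_cases hG : (G : Multiset (Finset (Fin n))) ∈
              {G | ∀ i ∈ T, ∀ j ∈ T, i ≠ j → ({i, j} : Finset (Fin n)) ∈ G}
          · rw [if_pos hG, if_pos ⟨hT, hG⟩, mul_one]
          · rw [if_neg hG, if_neg (fun h => hG h.2), mul_zero]
        · rw [if_neg hT]
          convert tsum_zero with G
          rw [if_neg (fun h => hT h.1), mul_zero]
    _ = ∑ T ∈ (Finset.univ : Finset (Finset (Fin n))).filter (fun T => T.card = 3),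
          prob μ {G | ∀ i ∈ T, ∀ j ∈ T, i ≠ j → ({i, j} : Finset (Fin n)) ∈ G} :=
        (Finset.sum_filter _ _).symm
    _ = _ := by
        apply Finset.sum_congr _ (fun _ _ => rfl)
        ext T
        simp [Finset.mem_powersetCard, Finset.subset_univ]

lemma lhs_toReal {n : ℕ} (μ : PMF (Multiset (Finset (Fin n)))) :
    (∑' G, (μ G).toReal * (triangleCount G : ℝ)) =
      (∑' G, μ G * (triangleCount G : ℝ≥0∞)).toReal := by
  rw [ENNReal.tsum_toReal_eq
    (fun G => ENNReal.mul_ne_top (μ.apply_ne_top G) (ENNReal.natCast_ne_top _))]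
  apply tsum_congr
  intro G
  rw [ENNReal.toReal_mul]
  norm_num

lemma trMat_pow (p : ℝ) (t : ℕ) :
    (trMat p ^ t) 0 0 = (1 - p/2)^t ∧
    (trMat p ^ t) 0 1 = 3*((1 - p/3)^t - (1 - p/2)^t) ∧
    (trMat p ^ t) 0 2 = 3*((1 - p/6)^t - 2*(1 - p/3)^t + (1 - p/2)^t) := by
  induction t with
  | zero =>
    refine ⟨?_, ?_, ?_⟩ <;> simp [Matrix.one_apply] <;> ring
  | succ t ih =>
    obtain ⟨h0, h1, h2⟩ := ih
    refine ⟨?_, ?_, ?_⟩ <;>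
      rw [pow_succ, Matrix.mul_apply, Fin.sum_univ_four, h0, h1, h2] <;>
      simp [trMat, Matrix.vecHead, Matrix.vecTail] <;> ring

lemma pb_zero (L : List ℝ≥0∞) : pbPMF L 0 = (L.map (fun q => 1 - min q 1)).prod := by
  induction L with
  | nil => simp [pbPMF]
  | cons q L ih =>
    rw [pbPMF, PMF.bind_apply]
    have key : ∀ b, bern q b * ((pbPMF L).map fun m => if b then m + 1 else m) 0 =
        if b then 0 else bern q b * pbPMF L 0 := by
      intro b
      rw [PMF.map_apply]
      cases b
      · simp only [Bool.false_eq_true, if_false]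
        congr 1
        rw [tsum_eq_single 0 (fun m hm => by rw [if_neg (Ne.symm hm)])]
        rw [if_pos rfl]
      · simp
    rw [tsum_congr key, tsum_bool]
    simp [ih, bern, PMF.ofFintype_apply]

lemma binom_tail (M : ℕ) {q : ℝ} (hq0 : 0 ≤ q) (hq1 : q ≤ 1) :
    (prob (binomPMF M (ENNReal.ofReal q)) {m | 1 ≤ m}).toReal = 1 - (1 - q) ^ M := by
  have hmin : min (ENNReal.ofReal q) 1 = ENNReal.ofReal q :=
    min_eq_left (by rw [← ENNReal.ofReal_one]; exact ENNReal.ofReal_le_ofReal hq1)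
  have hz : pbPMF (List.replicate M (ENNReal.ofReal q)) 0 =
      ENNReal.ofReal ((1 - q) ^ M) := by
    rw [pb_zero, List.map_replicate, List.prod_replicate, hmin]
    rw [← ENNReal.ofReal_one, ← ENNReal.ofReal_sub _ hq0,
      ← ENNReal.ofReal_pow (by linarith)]
  have hfin : prob (binomPMF M (ENNReal.ofReal q)) {m | 1 ≤ m} ≠ ⊤ := prob_ne_top _ _
  have key : pbPMF (List.replicate M (ENNReal.ofReal q)) 0 +
      prob (binomPMF M (ENNReal.ofReal q)) {m | 1 ≤ m} = 1 := by
    have h2 : ∀ m, ({m | 1 ≤ m} : Set ℕ).indicator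
        (pbPMF (List.replicate M (ENNReal.ofReal q))) m =
        @ite ℝ≥0∞ (m = 0) (Classical.propDecidable (m = 0)) 0
          (pbPMF (List.replicate M (ENNReal.ofReal q)) m) := by
      intro m
      rw [Set.indicator_apply]
      rcases Nat.eq_zero_or_pos m with rfl | hm
      · simp
      · have h0 : m ≠ 0 := by omega
        rw [if_pos (by exact hm), if_neg h0]
    have h3 := ENNReal.tsum_eq_add_tsum_ite
      (f := ⇑(pbPMF (List.replicate M (ENNReal.ofReal q)))) 0
    rw [prob, binomPMF, PMF.toOuterMeasure_apply, tsum_congr h2]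
    exact h3.symm.trans (PMF.tsum_coe _)
  rw [hz] at key
  have hreal := congrArg ENNReal.toReal key
  rw [ENNReal.toReal_add ENNReal.ofReal_ne_top hfin, ENNReal.toReal_one,
    ENNReal.toReal_ofReal (pow_nonneg (by linarith) M)] at hreal
  linarith

/-- The expected number of triangles in `G(n,p;C([n],4))` equals
`C(n,3)·[(1 - Σ_{i=0}^{2} p₀ᵢ⁽ⁿ⁻³⁾) + Σ_{i=0}^{2} p₀ᵢ⁽ⁿ⁻³⁾·P(Bin(C(n-3,2), p/6) ≥ 1)^(3-i)]`,
where `p₀ᵢ⁽ⁿ⁻³⁾` is the `(0,i)` entry of the `(n-3)`-rd power of the transition matrix. -/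
theorem expected_triangles_four_uniform (n : ℕ) (hn : 3 ≤ n) (p : ℝ)
    (hp0 : 0 ≤ p) (hp1 : p ≤ 1) :
    (∑' G, (modelPMF (ENNReal.ofReal p) (allSets n 4) G).toReal * (triangleCount G : ℝ)) =
      (n.choose 3 : ℝ) *
        ((1 - ∑ i ∈ ({0, 1, 2} : Finset (Fin 4)), (trMat p ^ (n - 3)) 0 i) +
          ∑ i ∈ ({0, 1, 2} : Finset (Fin 4)), (trMat p ^ (n - 3)) 0 i *
            (prob (binomPMF ((n - 3).choose 2) (ENNReal.ofReal (p / 6)))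
                {m : ℕ | 1 ≤ m}).toReal ^ (3 - (i : ℕ))) := by
  classical
  rw [lhs_toReal, expectation_eq]
  rw [ENNReal.toReal_sum (fun T _ => prob_ne_top _ _)]
  rw [Finset.sum_congr rfl (fun T hT =>
    triangle_prob hp0 hp1 (Finset.mem_powersetCard.mp hT).2)]
  rw [Finset.sum_const, Finset.card_powersetCard, Finset.card_univ, Fintype.card_fin,
    nsmul_eq_mul]
  congr 1
  obtain ⟨m0, m1, m2⟩ := trMat_pow p (n - 3)
  have hsum : ∀ f : Fin 4 → ℝ, ∑ i ∈ ({0, 1, 2} : Finset (Fin 4)), f i = f 0 + f 1 + f 2 := by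
    intro f
    rw [show ({0, 1, 2} : Finset (Fin 4)) = insert 0 (insert 1 {2}) from rfl,
      Finset.sum_insert (by decide), Finset.sum_insert (by decide), Finset.sum_singleton]
    ring
  rw [hsum, hsum, m0, m1, m2,
    binom_tail ((n - 3).choose 2) (by linarith : (0:ℝ) ≤ p / 6) (by linarith : p / 6 ≤ 1)]
  have hv0 : ((0 : Fin 4) : ℕ) = 0 := rfl
  have hv1 : ((1 : Fin 4) : ℕ) = 1 := rfl
  have hv2 : ((2 : Fin 4) : ℕ) = 2 := rfl
  rw [hv0, hv1, hv2]
  norm_num [gaux]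
  rw [show (1 - 2 * p / 6 : ℝ) = 1 - p / 3 by ring,
    show (1 - 3 * p / 6 : ℝ) = 1 - p / 2 by ring, pow_mul', pow_mul']
  generalize (1 - p / 2 : ℝ) ^ (n - 3) = X
  generalize (1 - p / 3 : ℝ) ^ (n - 3) = Y
  generalize (1 - p / 6 : ℝ) ^ (n - 3) = Z
  generalize ((1 - p / 6 : ℝ) ^ ((n - 3).choose 2)) = U
  ring
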